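/- arXiv:2009.05807 — 10 statements merged into one kernel-verified Lean document; each statement's English description precedes it below -/
import Mathlib

section
/- Let R be an associative unital ℂ-algebra, N ≥ 1, h ∈ ℂ, and let (l_i^j) and (∂_i^j), i,j ∈ {1,…,N}, be families of elements of R satisfying the permutation relations ∂_i^j · l_k^s = l_k^s · ∂_i^j + δ_i^s δ_k^j · 1 + h δ_k^j ∂_i^s for all indices i,j,k,s. Then for all indices i,j,k,s,p,q the element G = l_k^s l_p^q − l_p^q l_k^s − h(δ_p^s l_k^q − δ_k^q l_p^s) commutes with ∂_i^j, i.e. ∂_i^j · G = G · ∂_i^j. (Matrix form: D₁(L₂L₃ − L₃L₂ − hL₂P₂₃ + hP₂₃L₂) = (L₂L₃ − L₃L₂ − hL₂P₂₃ + hP₂₃L₂)D₁, so the permutation map is compatible with the defining relations of U(gl(N)_h) and of the commutative algebra generated by the ∂_i^j.) -/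
/-- If the families `l` and `∂` satisfy the permutation relations
`∂_i^j · l_k^s = l_k^s · ∂_i^j + δ_i^s δ_k^j · 1 + h δ_k^j ∂_i^s`, then every
defining-relation element `G = l_k^s l_p^q − l_p^q l_k^s − h(δ_p^s l_k^q − δ_k^q l_p^s)`
of `U(gl(N)_h)` commutes with every `∂_i^j`. -/
theorem quantum_double_compatibility
    {R : Type*} [Ring R] [Algebra ℂ R] (N : ℕ) (hN : 1 ≤ N) (h : ℂ)
    (l D : Fin N → Fin N → R)
    (perm : ∀ i j k s : Fin N,
      D i j * l k s =
        l k s * D i j + (if i = s ∧ k = j then (1 : R) else 0)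
          + h • (if k = j then D i s else 0)) :
    ∀ i j k s p q : Fin N,
      D i j * (l k s * l p q - l p q * l k s
          - h • ((if p = s then l k q else 0) - (if k = q then l p s else 0)))
        = (l k s * l p q - l p q * l k s
          - h • ((if p = s then l k q else 0) - (if k = q then l p s else 0))) * D i j := by
  intro i j k s p q
  set δ : Fin N → Fin N → ℂ := fun a b => if a = b then 1 else 0 with hδ
  have perm' : ∀ a b c d : Fin N, D a b * l c d =
      l c d * D a b + (δ a d * δ c b) • (1 : R) + (h * δ c b) • D a d := by
    intro a b c d
    rw [perm a b c d]
    simp only [hδ]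
    split_ifs with h1 h2 h3 <;> simp_all [mul_smul, smul_smul]
  have perm'' : ∀ (x : R) (a b c d : Fin N), x * D a b * l c d =
      x * l c d * D a b + (δ a d * δ c b) • x + (h * δ c b) • (x * D a d) := by
    intro x a b c d
    rw [mul_assoc, perm', mul_add, mul_add, mul_smul_comm, mul_one, mul_smul_comm, ← mul_assoc]
  have hif : ∀ (a b : Fin N) (x : R), (if a = b then x else 0) = δ a b • x := by
    intro a b x; simp only [hδ]; split_ifs <;> simp
  rw [hif p s, hif k q]
  simp only [mul_sub, sub_mul, smul_sub, mul_smul_comm, smul_mul_assoc, ← mul_assoc,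
    perm', perm'', mul_add, add_mul, smul_add, mul_one, one_mul]
  module
end

section
/- Let R be an associative unital ℂ-algebra containing elements t, x, y, z satisfying the u(2)_h relations: xy − yx = 2iħz, yz − zy = 2iħx, zx − xz = 2iħy, and t commutes with x, y, z, where ħ ∈ ℂ. In the ring of 2×2 matrices over R define 𝒟(t) = (t + iħ)·I, 𝒟(x) = [[x, −ħ],[−ħ, x]], 𝒟(y) = [[y, −iħ],[iħ, y]], 𝒟(z) = [[z − ħ, 0],[0, z + ħ]]. Then these matrices satisfy the same relations: 𝒟(x)𝒟(y) − 𝒟(y)𝒟(x) = 2iħ𝒟(z), 𝒟(y)𝒟(z) − 𝒟(z)𝒟(y) = 2iħ𝒟(x), 𝒟(z)𝒟(x) − 𝒟(x)𝒟(z) = 2iħ𝒟(y), and 𝒟(t) commutes with 𝒟(x), 𝒟(y), 𝒟(z). Hence 𝒟 extends to an algebra homomorphism from U(u(2)_h) to the 2×2 matrices over R. -/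
/-- if `t, x, y, z ∈ R` satisfy the `u(2)_h` relations (`h = 2iħ`, here `ħ = hb`),
then the 2×2 matrices `𝒟(t) = (t + iħ)I`, `𝒟(x) = [[x, −ħ],[−ħ, x]]`,
`𝒟(y) = [[y, −iħ],[iħ, y]]`, `𝒟(z) = [[z − ħ, 0],[0, z + ħ]]` satisfy the same relations,
hence `𝒟` extends to an algebra homomorphism `U(u(2)_h) → Mat₂(R)`. -/
theorem D_matrices_satisfy_u2_relations
    {R : Type*} [Ring R] [Algebra ℂ R] (hb : ℂ) (t x y z : R)
    (hxy : x * y - y * x = (2 * Complex.I * hb) • z)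
    (hyz : y * z - z * y = (2 * Complex.I * hb) • x)
    (hzx : z * x - x * z = (2 * Complex.I * hb) • y)
    (htx : t * x = x * t) (hty : t * y = y * t) (htz : t * z = z * t) :
    let Dt : Matrix (Fin 2) (Fin 2) R := (t + (Complex.I * hb) • (1 : R)) • (1 : Matrix (Fin 2) (Fin 2) R)
    let Dx : Matrix (Fin 2) (Fin 2) R := !![x, (-hb) • (1 : R); (-hb) • (1 : R), x]
    let Dy : Matrix (Fin 2) (Fin 2) R := !![y, (-(Complex.I * hb)) • (1 : R); (Complex.I * hb) • (1 : R), y]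
    let Dz : Matrix (Fin 2) (Fin 2) R := !![z - hb • (1 : R), 0; 0, z + hb • (1 : R)]
    Dx * Dy - Dy * Dx = (2 * Complex.I * hb) • Dz ∧
    Dy * Dz - Dz * Dy = (2 * Complex.I * hb) • Dx ∧
    Dz * Dx - Dx * Dz = (2 * Complex.I * hb) • Dy ∧
    Dt * Dx = Dx * Dt ∧ Dt * Dy = Dy * Dt ∧ Dt * Dz = Dz * Dt := by
  intro Dt Dx Dy Dz
  have hA : ((2 * hb ^ 2 * Complex.I ^ 2 : ℂ)) • (1 : R) = (-(2 * hb ^ 2) : ℂ) • (1 : R) := by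
    rw [Complex.I_sq]; module
  have hB : ((-(2 * hb ^ 2) * Complex.I ^ 2 : ℂ)) • (1 : R) = ((2 * hb ^ 2) : ℂ) • (1 : R) := by
    rw [Complex.I_sq]; module
  refine ⟨?_, ?_, ?_, ?_, ?_, ?_⟩ <;>
  · ext i j
    fin_cases i <;> fin_cases j <;>
      simp only [Dt, Dx, Dy, Dz, Matrix.mul_apply, Fin.sum_univ_two, Matrix.smul_apply,
        Matrix.sub_apply, Matrix.add_apply, Matrix.of_apply, Matrix.cons_val', Matrix.cons_val_zero,
        Matrix.cons_val_one, Matrix.head_cons, Matrix.empty_val', Matrix.cons_val_fin_one,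
        Matrix.head_fin_const, Matrix.one_apply, Fin.zero_eta, Fin.mk_one,
        if_true, if_false, eq_self_iff_true, one_ne_zero, zero_ne_one, Fin.one_eq_zero_iff,
        Fin.zero_eq_one_iff, Nat.succ_ne_self, ite_true, ite_false, reduceCtorEq,
        smul_eq_mul, mul_smul_comm, smul_mul_assoc, smul_smul, sub_mul, mul_sub, add_mul, mul_add,
        smul_sub, smul_add, mul_zero, zero_mul, mul_one, one_mul, smul_zero, zero_add,
        add_zero, Ne, OfNat.ofNat_ne_zero, not_false_iff] <;>
    first
      | module
      | linear_combination (norm := module) hxy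
      | linear_combination (norm := module) hyz
      | linear_combination (norm := module) hzx
      | linear_combination (norm := module) htx
      | linear_combination (norm := module) hty
      | linear_combination (norm := module) htz
      | linear_combination (norm := module) hA
      | linear_combination (norm := module) hB
end

section
/- Let R be an associative unital ℂ-algebra containing elements t, x, y, z satisfying the u(2)_h relations: xy − yx = 2iħz, yz − zy = 2iħx, zx − xz = 2iħy, and t commutes with x, y, z, where ħ ∈ ℂ. Then the 2×2 matrix L = [[t − iz, −ix − y],[−ix + y, t + iz]] over R satisfies the Cayley–Hamilton identity L² − (2t + 2iħ)L + (t² + x² + y² + z² + 2iħt)·I = 0. -/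
/-- if `t, x, y, z ∈ R` satisfy the `u(2)_h` relations (`h = 2iħ`, here `ħ = hb`),
then the generating matrix `L = [[t − iz, −ix − y],[−ix + y, t + iz]]` satisfies the
Cayley–Hamilton identity `L² − (2t + 2iħ)L + (t² + x² + y² + z² + 2iħt)I = 0`. -/
theorem CayleyHamilton_for_L
    {R : Type*} [Ring R] [Algebra ℂ R] (hb : ℂ) (t x y z : R)
    (hxy : x * y - y * x = (2 * Complex.I * hb) • z)
    (hyz : y * z - z * y = (2 * Complex.I * hb) • x)
    (hzx : z * x - x * z = (2 * Complex.I * hb) • y)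
    (htx : t * x = x * t) (hty : t * y = y * t) (htz : t * z = z * t) :
    let L : Matrix (Fin 2) (Fin 2) R :=
      !![t - Complex.I • z, -(Complex.I • x) - y;
         -(Complex.I • x) + y, t + Complex.I • z]
    L * L - ((2 : ℂ) • t + (2 * Complex.I * hb) • (1 : R)) • L
      + (t * t + x * x + y * y + z * z + (2 * Complex.I * hb) • t)
          • (1 : Matrix (Fin 2) (Fin 2) R) = 0 := by
  intro L
  ext i j
  fin_cases i <;> fin_cases j <;>
    simp [L, Matrix.mul_apply, Fin.sum_univ_two, Matrix.one_apply]
  · linear_combination (norm :=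
      (simp only [mul_add, add_mul, sub_mul, mul_sub, neg_mul, mul_neg, mul_smul_comm,
        smul_mul_assoc, smul_sub, smul_add, smul_smul, one_mul, mul_one, smul_neg];
       match_scalars <;> first | ring1 | (ring_nf; simp [Complex.I_sq]; try ring1)))
      (-Complex.I) • hxy + Complex.I • htz
  · linear_combination (norm :=
      (simp only [mul_add, add_mul, sub_mul, mul_sub, neg_mul, mul_neg, mul_smul_comm,
        smul_mul_assoc, smul_sub, smul_add, smul_smul, one_mul, mul_one, smul_neg];
       match_scalars <;> first | ring1 | (ring_nf; simp [Complex.I_sq]; try ring1)))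
      Complex.I • htx + hty - hzx - Complex.I • hyz
  · linear_combination (norm :=
      (simp only [mul_add, add_mul, sub_mul, mul_sub, neg_mul, mul_neg, mul_smul_comm,
        smul_mul_assoc, smul_sub, smul_add, smul_smul, one_mul, mul_one, smul_neg];
       match_scalars <;> first | ring1 | (ring_nf; simp [Complex.I_sq]; try ring1)))
      Complex.I • htx - hty + hzx - Complex.I • hyz
  · linear_combination (norm :=
      (simp only [mul_add, add_mul, sub_mul, mul_sub, neg_mul, mul_neg, mul_smul_comm,
        smul_mul_assoc, smul_sub, smul_add, smul_smul, one_mul, mul_one, smul_neg];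
       match_scalars <;> first | ring1 | (ring_nf; simp [Complex.I_sq]; try ring1)))
      Complex.I • hxy + (-Complex.I) • htz
end

section
/- Let R be an associative unital ℂ-algebra containing elements x, y, z satisfying xy − yx = 2iħz, yz − zy = 2iħx, zx − xz = 2iħy, where ħ ∈ ℂ. Let A, B, C be the 4×4 complex matrices A = [[0,1,0,0],[−1,0,0,0],[0,0,0,−1],[0,0,1,0]], B = [[0,0,1,0],[0,0,0,1],[−1,0,0,0],[0,−1,0,0]], C = [[0,0,0,1],[0,0,−1,0],[0,1,0,0],[−1,0,0,0]], and set M = xA + yB + zC in the 4×4 matrices over R. Then M satisfies the Cayley–Hamilton identity M² − 2iħM + (x² + y² + z²)·I = 0. -/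
/-- The 4×4 matrix `A` (with entries in any ring `R`). -/
def matA (R : Type*) [Ring R] : Matrix (Fin 4) (Fin 4) R :=
  !![0, 1, 0, 0; -1, 0, 0, 0; 0, 0, 0, -1; 0, 0, 1, 0]

/-- The 4×4 matrix `B` (with entries in any ring `R`). -/
def matB (R : Type*) [Ring R] : Matrix (Fin 4) (Fin 4) R :=
  !![0, 0, 1, 0; 0, 0, 0, 1; -1, 0, 0, 0; 0, -1, 0, 0]

/-- The 4×4 matrix `C` (with entries in any ring `R`). -/
def matC (R : Type*) [Ring R] : Matrix (Fin 4) (Fin 4) R :=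
  !![0, 0, 0, 1; 0, 0, -1, 0; 0, 1, 0, 0; -1, 0, 0, 0]

set_option maxHeartbeats 4000000 in
/-- if `x, y, z ∈ R` satisfy the `su(2)_h` relations (`h = 2iħ`, here `ħ = hb`),
then `M = xA + yB + zC` satisfies the Cayley–Hamilton identity
`M² − 2iħM + (x² + y² + z²)I = 0`. -/
theorem CayleyHamilton_for_M
    {R : Type*} [Ring R] [Algebra ℂ R] (hb : ℂ) (x y z : R)
    (hxy : x * y - y * x = (2 * Complex.I * hb) • z)
    (hyz : y * z - z * y = (2 * Complex.I * hb) • x)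
    (hzx : z * x - x * z = (2 * Complex.I * hb) • y) :
    let M : Matrix (Fin 4) (Fin 4) R := x • matA R + y • matB R + z • matC R
    M ^ 2 - (2 * Complex.I * hb) • M
      + (x * x + y * y + z * z) • (1 : Matrix (Fin 4) (Fin 4) R) = 0 := by
  intro M
  have hxy' : x * y = y * x + (2 * Complex.I * hb) • z := by rw [← hxy]; abel
  have hyz' : y * z = z * y + (2 * Complex.I * hb) • x := by rw [← hyz]; abel
  have hzx' : z * x = x * z + (2 * Complex.I * hb) • y := by rw [← hzx]; abel
  show (x • matA R + y • matB R + z • matC R) ^ 2 - _ + _ = _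
  ext i j
  fin_cases i <;> fin_cases j <;>
    simp [matA, matB, matC, pow_two, Matrix.mul_apply, Fin.sum_univ_succ, Matrix.one_apply,
      hxy', hyz', hzx', smul_add, mul_add, add_mul, smul_smul] <;> (try abel) <;>
    simp [M, matA, matB, matC, Matrix.add_apply, Matrix.smul_apply, smul_smul, Matrix.vecHead,
      Matrix.vecTail, Function.comp] <;> abel
end

section
/- Let R be an associative unital ℂ-algebra containing elements x, y, z satisfying xy − yx = 2iħz, yz − zy = 2iħx, zx − xz = 2iħy (ħ ∈ ℂ), and a central invertible element μ commuting with x, y, z such that μ² = −4(x² + y² + z² + ħ²). Let M = xA + yB + zC in the 4×4 matrices over R, with A = [[0,1,0,0],[−1,0,0,0],[0,0,0,−1],[0,0,1,0]], B = [[0,0,1,0],[0,0,0,1],[−1,0,0,0],[0,−1,0,0]], C = [[0,0,0,1],[0,0,−1,0],[0,1,0,0],[−1,0,0,0]]. Then the matrix T(μ) := μ⁻¹(μ² − 4ħ²)·I − 4iħμ⁻¹·M satisfies T(μ)² = (μ² − 12ħ²)·I − 8iħM, i.e. T(μ)² equals T(μ²), so the multiplicative extension of the quantum partial derivatives to the central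 extension by μ is consistent. -/
lemma mul_smul_central {R : Type*} [Ring R] (r : R) (h : ∀ s : R, r * s = s * r)
    (P Q : Matrix (Fin 4) (Fin 4) R) : P * (r • Q) = r • (P * Q) := by
  ext i j
  simp only [Matrix.mul_apply, Matrix.smul_apply, smul_eq_mul, Finset.mul_sum]
  exact Finset.sum_congr rfl fun k _ => by rw [← mul_assoc, ← h, mul_assoc]

/-- with `x, y, z` satisfying the `su(2)_h` relations (`ħ = hb`) and `μ` a
central invertible element with `μ² = −4(x² + y² + z² + ħ²)`, the matrix
`T(μ) = μ⁻¹(μ² − 4ħ²)I − 4iħμ⁻¹M` satisfies `T(μ)² = (μ² − 12ħ²)I − 8iħM = T(μ²)`. -/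
theorem T_mu_square_consistency
    {R : Type*} [Ring R] [Algebra ℂ R] (hb : ℂ) (x y z μ μinv : R)
    (hxy : x * y - y * x = (2 * Complex.I * hb) • z)
    (hyz : y * z - z * y = (2 * Complex.I * hb) • x)
    (hzx : z * x - x * z = (2 * Complex.I * hb) • y)
    (hcentral : ∀ r : R, μ * r = r * μ)
    (hinv₁ : μ * μinv = 1) (hinv₂ : μinv * μ = 1)
    (hμsq : μ * μ = (-4 : ℂ) • (x * x + y * y + z * z + (hb ^ 2) • (1 : R))) :
    let M : Matrix (Fin 4) (Fin 4) R := x • matA R + y • matB R + z • matC R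
    let Tμ : Matrix (Fin 4) (Fin 4) R :=
      (μinv * (μ * μ - (4 * hb ^ 2) • (1 : R))) • (1 : Matrix (Fin 4) (Fin 4) R)
        - (4 * Complex.I * hb) • (μinv • M)
    Tμ ^ 2 = (μ * μ - (12 * hb ^ 2) • (1 : R)) • (1 : Matrix (Fin 4) (Fin 4) R)
        - (8 * Complex.I * hb) • M := by
  intro M Tμ
  -- μinv is central
  have hν : ∀ r : R, μinv * r = r * μinv := by
    intro r
    have h1 : μ * (r * μinv) = r := by
      rw [← mul_assoc, hcentral r, mul_assoc, hinv₁, mul_one]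
    calc μinv * r = μinv * (μ * (r * μinv)) := by rw [h1]
      _ = r * μinv := by rw [← mul_assoc, hinv₂, one_mul]
  have hμμ : ∀ r : R, (μ * μ) * r = r * (μ * μ) := by
    intro r
    rw [mul_assoc, hcentral r, ← mul_assoc, hcentral r, mul_assoc]
  -- the M² identity
  have hxy' : x*y = y*x + (2 * Complex.I * hb) • z := by rw [← hxy]; abel
  have hyz' : y*z = z*y + (2 * Complex.I * hb) • x := by rw [← hyz]; abel
  have hzx' : z*x = x*z + (2 * Complex.I * hb) • y := by rw [← hzx]; abel
  have hM2 : M * M = (-(x*x+y*y+z*z)) • (1 : Matrix (Fin 4) (Fin 4) R)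
      + (2 * Complex.I * hb) • M := by
    show (x • matA R + y • matB R + z • matC R) * (x • matA R + y • matB R + z • matC R) = _
    ext i j
    fin_cases i <;> fin_cases j <;>
      simp [M, matA, matB, matC, Matrix.mul_apply, Fin.sum_univ_four, Matrix.one_apply,
        hxy', hyz', hzx', mul_add, add_mul, smul_smul] <;>
      abel
  set u : R := μ * μ - (4 * hb ^ 2) • (1 : R) with hu
  have hucen : ∀ r : R, u * r = r * u := by
    intro r
    simp only [hu, sub_mul, mul_sub, smul_mul_assoc, one_mul, mul_smul_comm, mul_one, hμμ r]
  set N : Matrix (Fin 4) (Fin 4) R :=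
    u • (1 : Matrix (Fin 4) (Fin 4) R) - (4 * Complex.I * hb) • M with hN
  have hTμ : Tμ = μinv • N := by
    show _ - _ = _
    rw [hN, smul_sub, smul_smul, smul_comm]
  have step2 : Tμ ^ 2 = (μinv * μinv) • (N * N) := by
    rw [pow_two, hTμ, Matrix.smul_mul, mul_smul_central μinv hν, smul_smul]
  -- compute N * N
  have hNN : N * N = (u * u) • (1 : Matrix (Fin 4) (Fin 4) R)
      - (8 * Complex.I * hb) • (u • M)
      + ((4 * Complex.I * hb) * (4 * Complex.I * hb)) • (M * M) := by
    rw [hN]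
    rw [sub_mul, mul_sub, mul_sub]
    rw [Matrix.smul_mul, Matrix.smul_mul, mul_smul_central u hucen, smul_smul,
      mul_smul_central u hucen]
    simp only [one_mul, mul_one, Matrix.smul_mul, mul_smul_comm, smul_comm u (4 * Complex.I * hb),
      smul_smul]
    have h8 : (8 * Complex.I * hb) • (u • M)
        = (4 * Complex.I * hb) • (u • M) + (4 * Complex.I * hb) • (u • M) := by
      rw [← add_smul]; ring_nf
    rw [h8]
    abel
  -- key cancellation: μinv² • (μμ • X) = X
  have hcancel : ∀ X : Matrix (Fin 4) (Fin 4) R,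
      (μinv * μinv) • ((μ * μ) • X) = X := by
    intro X
    rw [smul_smul]
    have : μinv * μinv * (μ * μ) = 1 := by
      rw [mul_assoc, ← mul_assoc μinv μ μ, hinv₂, one_mul, hinv₂]
    rw [this, one_smul]
  -- reduce to an identity without inverses
  have key : N * N = (μ * μ) • ((μ * μ - (12 * hb ^ 2) • (1 : R)) •
      (1 : Matrix (Fin 4) (Fin 4) R) - (8 * Complex.I * hb) • M) := by
    have hcc : (4*Complex.I*hb) * (4*Complex.I*hb) = -(16*hb^2) := by
      linear_combination 16*hb^2*Complex.I_sq
    have hcc2 : ((4*Complex.I*hb) * (4*Complex.I*hb)) * (2*Complex.I*hb)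
        = -(32*Complex.I*hb^3) := by
      linear_combination 32*Complex.I*hb^3*Complex.I_sq
    have S1 : u * u + ((16*hb^2 : ℂ)) • (x*x+y*y+z*z)
        = (μ*μ) * (μ*μ - (12*hb^2) • (1:R)) := by
      rw [hu, hμsq]
      simp only [smul_mul_assoc, mul_smul_comm, sub_mul, mul_sub, smul_smul, smul_sub,
        sub_smul, one_mul, mul_one]
      module
    have S2 : (8*Complex.I*hb) • (u • M)
        = (8*Complex.I*hb) • ((μ*μ) • M) - (32*Complex.I*hb^3) • M := by
      rw [hu, sub_smul, smul_sub]
      congr 1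
      rw [smul_assoc, one_smul, smul_smul]
      ring_nf
    have rhs_eq : (μ * μ) • ((μ * μ - (12 * hb ^ 2) • (1 : R)) •
        (1 : Matrix (Fin 4) (Fin 4) R) - (8 * Complex.I * hb) • M)
        = ((μ*μ) * (μ*μ - (12*hb^2) • (1:R))) • (1 : Matrix (Fin 4) (Fin 4) R)
          - (8*Complex.I*hb) • ((μ*μ) • M) := by
      rw [smul_sub, smul_smul, smul_comm]
    rw [hNN, hM2, rhs_eq, ← S1, S2]
    rw [smul_add ((4*Complex.I*hb)*(4*Complex.I*hb)),
      smul_smul ((4*Complex.I*hb)*(4*Complex.I*hb)) (2*Complex.I*hb) M, hcc2, hcc]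
    simp only [neg_smul, smul_neg, neg_neg, add_smul, smul_assoc, one_smul]
    abel
  rw [step2, key, hcancel]
end

section
/- Let R be an associative unital ℂ-algebra containing elements x, y, z satisfying xy − yx = 2iħz, yz − zy = 2iħx, zx − xz = 2iħy (ħ ∈ ℂ), and a central invertible element μ commuting with x, y, z such that μ² = −4(x² + y² + z² + ħ²). Let M = xA + yB + zC with A, B, C the 4×4 matrices A = [[0,1,0,0],[−1,0,0,0],[0,0,0,−1],[0,0,1,0]], B = [[0,0,1,0],[0,0,0,1],[−1,0,0,0],[0,−1,0,0]], C = [[0,0,0,1],[0,0,−1,0],[0,1,0,0],[−1,0,0,0]], and T(μ) := μ⁻¹(μ² − 4ħ²)·I − 4iħμ⁻¹·M. Then for every natural number p: T(μ)^p = (2μ)⁻¹((μ + 2iħ)^{p+1} + (μ − 2iħ)^{p+1})·I + μ⁻¹((μ − 2iħ)^p − (μ + 2iħ)^p)·M. -/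
section AuxMat

variable {R : Type*} [Ring R]

private lemma central_smul_right {a : R} (ha : ∀ r : R, a * r = r * a)
    (N P : Matrix (Fin 4) (Fin 4) R) : N * (a • P) = a • (N * P) := by
  ext i j
  simp only [Matrix.mul_apply, Matrix.smul_apply, smul_eq_mul, Finset.mul_sum]
  refine Finset.sum_congr rfl fun k _ => ?_
  rw [← mul_assoc, ← ha (N i k), mul_assoc]

private lemma entries_central_smul_right {K : Matrix (Fin 4) (Fin 4) R}
    (hK : ∀ i k (r : R), K i k * r = r * K i k) (a : R) (P : Matrix (Fin 4) (Fin 4) R) :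
    K * (a • P) = a • (K * P) := by
  ext i j
  simp only [Matrix.mul_apply, Matrix.smul_apply, smul_eq_mul, Finset.mul_sum]
  refine Finset.sum_congr rfl fun k _ => ?_
  rw [← mul_assoc, hK i k a, mul_assoc]

private lemma matA_central : ∀ i k (r : R), matA R i k * r = r * matA R i k := by
  intro i k r
  fin_cases i <;> fin_cases k <;>
    simp [matA, Matrix.vecHead, Matrix.vecTail, neg_mul, mul_neg]

private lemma matB_central : ∀ i k (r : R), matB R i k * r = r * matB R i k := by
  intro i k r
  fin_cases i <;> fin_cases k <;>
    simp [matB, Matrix.vecHead, Matrix.vecTail, neg_mul, mul_neg]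

private lemma matC_central : ∀ i k (r : R), matC R i k * r = r * matC R i k := by
  intro i k r
  fin_cases i <;> fin_cases k <;>
    simp [matC, Matrix.vecHead, Matrix.vecTail, neg_mul, mul_neg]

private lemma matAA : matA R * matA R = -1 := by
  ext i j; fin_cases i <;> fin_cases j <;>
    simp [matA, Matrix.mul_apply, Fin.sum_univ_four, Matrix.one_apply,
      Matrix.vecHead, Matrix.vecTail]

private lemma matBB : matB R * matB R = -1 := by
  ext i j; fin_cases i <;> fin_cases j <;>
    simp [matB, Matrix.mul_apply, Fin.sum_univ_four, Matrix.one_apply,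
      Matrix.vecHead, Matrix.vecTail]

private lemma matCC : matC R * matC R = -1 := by
  ext i j; fin_cases i <;> fin_cases j <;>
    simp [matC, Matrix.mul_apply, Fin.sum_univ_four, Matrix.one_apply,
      Matrix.vecHead, Matrix.vecTail]

private lemma matAB : matA R * matB R = matC R := by
  ext i j; fin_cases i <;> fin_cases j <;>
    simp [matA, matB, matC, Matrix.mul_apply, Fin.sum_univ_four,
      Matrix.vecHead, Matrix.vecTail]

private lemma matBA : matB R * matA R = -matC R := by
  ext i j; fin_cases i <;> fin_cases j <;>
    simp [matA, matB, matC, Matrix.mul_apply, Fin.sum_univ_four,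
      Matrix.vecHead, Matrix.vecTail]

private lemma matBC : matB R * matC R = matA R := by
  ext i j; fin_cases i <;> fin_cases j <;>
    simp [matA, matB, matC, Matrix.mul_apply, Fin.sum_univ_four,
      Matrix.vecHead, Matrix.vecTail]

private lemma matCB : matC R * matB R = -matA R := by
  ext i j; fin_cases i <;> fin_cases j <;>
    simp [matA, matB, matC, Matrix.mul_apply, Fin.sum_univ_four,
      Matrix.vecHead, Matrix.vecTail]

private lemma matCA : matC R * matA R = matB R := by
  ext i j; fin_cases i <;> fin_cases j <;>
    simp [matA, matB, matC, Matrix.mul_apply, Fin.sum_univ_four,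
      Matrix.vecHead, Matrix.vecTail]

private lemma matAC : matA R * matC R = -matB R := by
  ext i j; fin_cases i <;> fin_cases j <;>
    simp [matA, matB, matC, Matrix.mul_apply, Fin.sum_univ_four,
      Matrix.vecHead, Matrix.vecTail]

end AuxMat

section AuxScalar

variable {Z : Type*} [CommRing Z]

private lemma stepA' (m n d g q E F P Q : Z)
    (h1 : d * m + d * m = 1) (h2 : d + d = n) (h3 : q + q + q + q = m * m - g * g)
    (hE : E = m + g) (hF : F = m - g) :
    (d * (P * E + Q * F)) * (n * (m * m + g * g))
      + (n * (Q - P)) * (-(g * n + g * n) * q)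
      = d * ((P * E) * E + (Q * F) * F) := by
  subst hE hF
  linear_combination
    (4*d*g*q*Q - 4*d*g*q*P + d*g^3*Q - d*g^3*P + 2*n*g*q*Q - 2*n*g*q*P
        - m*d*g^2*Q - m*d*g^2*P + m^2*d*g*Q - m^2*d*g*P - m^3*d*Q - m^3*d*P) * h2
    + (-(2*d^2*g*(Q - P))) * h3
    + (d*(P*(m+g)^2 + Q*(m-g)^2)) * h1

private lemma stepB' (m n d g E F P Q : Z)
    (h1 : d * m + d * m = 1) (h2 : d + d = n)
    (hE : E = m + g) (hF : F = m - g) :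
    (d * (P * E + Q * F)) * (-(g * n + g * n))
      + (n * (Q - P)) * (n * (m * m + g * g))
      + (n * (Q - P)) * (-(g * n + g * n) * g)
      = n * (Q * F - P * E) := by
  subst hE hF
  linear_combination
    (-g*Q - g*P + n*g^2*Q - n*g^2*P + m*Q - m*P + 2*m*d*g*Q + 2*m*d*g*P
        - 2*m^2*d*Q + 2*m^2*d*P - m^2*n*Q + m^2*n*P) * h2
    + (2*d*(Q*(m-g) - P*(m+g))) * h1

end AuxScalar

/-- with `x, y, z` satisfying the `su(2)_h` relations (`ħ = hb`) and `μ` a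
central invertible element with `μ² = −4(x² + y² + z² + ħ²)`, for every natural `p`,
`T(μ)^p = (2μ)⁻¹((μ + 2iħ)^{p+1} + (μ − 2iħ)^{p+1})I + μ⁻¹((μ − 2iħ)^p − (μ + 2iħ)^p)M`,
where `T(μ) = μ⁻¹(μ² − 4ħ²)I − 4iħμ⁻¹M` and `M = xA + yB + zC`. -/
theorem T_mu_powers
    {R : Type*} [Ring R] [Algebra ℂ R] (hb : ℂ) (x y z μ μinv : R)
    (hxy : x * y - y * x = (2 * Complex.I * hb) • z)
    (hyz : y * z - z * y = (2 * Complex.I * hb) • x)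
    (hzx : z * x - x * z = (2 * Complex.I * hb) • y)
    (hcentral : ∀ r : R, μ * r = r * μ)
    (hinv₁ : μ * μinv = 1) (hinv₂ : μinv * μ = 1)
    (hμsq : μ * μ = (-4 : ℂ) • (x * x + y * y + z * z + (hb ^ 2) • (1 : R))) :
    let c : R := (2 * Complex.I * hb) • (1 : R)
    let M : Matrix (Fin 4) (Fin 4) R := x • matA R + y • matB R + z • matC R
    let Tμ : Matrix (Fin 4) (Fin 4) R :=
      (μinv * (μ * μ - (4 * hb ^ 2) • (1 : R))) • (1 : Matrix (Fin 4) (Fin 4) R)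
        - (4 * Complex.I * hb) • (μinv • M)
    ∀ p : ℕ,
      Tμ ^ p =
        ((((1 : ℂ) / 2) • μinv) * ((μ + c) ^ (p + 1) + (μ - c) ^ (p + 1)))
            • (1 : Matrix (Fin 4) (Fin 4) R)
          + (μinv * ((μ - c) ^ p - (μ + c) ^ p)) • M := by
  intro c M Tμ
  -- basic centrality facts
  have hν : ∀ r : R, μinv * r = r * μinv := by
    intro r
    have h1 : μ * (r * μinv) = r := by
      rw [hcentral (r * μinv), mul_assoc, hinv₂, mul_one]
    calc μinv * r = μinv * (μ * (r * μinv)) := by rw [h1]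
      _ = (μinv * μ) * (r * μinv) := by rw [mul_assoc]
      _ = r * μinv := by rw [hinv₂, one_mul]
  have hcc : ∀ r : R, c * r = r * c := by
    intro r
    show ((2 * Complex.I * hb) • (1 : R)) * r = r * ((2 * Complex.I * hb) • (1 : R))
    rw [smul_mul_assoc, one_mul, mul_smul_comm, mul_one]
  have hcmul : ∀ r : R, c * r = (2 * Complex.I * hb) • r := by
    intro r
    show ((2 * Complex.I * hb) • (1 : R)) * r = _
    rw [smul_mul_assoc, one_mul]
  -- the central scalar qv
  set qv : R := ((1 : ℂ)/4) • (μ * μ) + (hb ^ 2) • (1 : R) with hqv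
  have hccval : c * c = (-(4 * hb ^ 2) : ℂ) • (1 : R) := by
    rw [hcmul c]
    show (2 * Complex.I * hb) • ((2 * Complex.I * hb) • (1 : R)) = _
    rw [smul_smul]
    congr 1
    linear_combination (4 * hb ^ 2) * Complex.I_mul_I
  have hqveq : -(x * x + y * y + z * z) = qv := by
    rw [hqv, hμsq]; module
  -- membership in the center
  have hmz : μ ∈ Subalgebra.center ℂ R :=
    Subalgebra.mem_center_iff.mpr fun b => (hcentral b).symm
  have hnz : μinv ∈ Subalgebra.center ℂ R :=
    Subalgebra.mem_center_iff.mpr fun b => (hν b).symm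
  have hgz : c ∈ Subalgebra.center ℂ R :=
    Subalgebra.mem_center_iff.mpr fun b => (hcc b).symm
  have hqz : qv ∈ Subalgebra.center ℂ R := by
    rw [hqv]
    exact add_mem (Subalgebra.smul_mem _ (mul_mem hmz hmz) _)
      (Subalgebra.smul_mem _ (one_mem _) _)
  have hdz : ((1 : ℂ)/2) • μinv ∈ Subalgebra.center ℂ R := Subalgebra.smul_mem _ hnz _
  -- Z-level elements
  set Zc := Subalgebra.center ℂ R with hZc
  let mz : Zc := ⟨μ, hmz⟩
  let nz : Zc := ⟨μinv, hnz⟩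
  let gz : Zc := ⟨c, hgz⟩
  let qz : Zc := ⟨qv, hqz⟩
  let dz : Zc := ⟨((1 : ℂ)/2) • μinv, hdz⟩
  have h1z : dz * mz + dz * mz = 1 := by
    apply Subtype.ext
    show (((1 : ℂ)/2) • μinv) * μ + (((1 : ℂ)/2) • μinv) * μ = (1 : R)
    rw [smul_mul_assoc, hinv₂, ← add_smul]
    norm_num
  have h2z : dz + dz = nz := by
    apply Subtype.ext
    show ((1 : ℂ)/2) • μinv + ((1 : ℂ)/2) • μinv = μinv
    rw [← add_smul]; norm_num
  have h3z : qz + qz + qz + qz = mz * mz - gz * gz := by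
    apply Subtype.ext
    show qv + qv + qv + qv = μ * μ - c * c
    rw [hqv, hccval]; module
  -- M * M
  have hMdef : M = x • matA R + y • matB R + z • matC R := rfl
  have hMM : M * M = qv • (1 : Matrix (Fin 4) (Fin 4) R) + c • M := by
    have e1 : M * M
        = (x*x) • (matA R * matA R) + (x*y) • (matA R * matB R) + (x*z) • (matA R * matC R)
          + (y*x) • (matB R * matA R) + (y*y) • (matB R * matB R) + (y*z) • (matB R * matC R)
          + (z*x) • (matC R * matA R) + (z*y) • (matC R * matB R)
          + (z*z) • (matC R * matC R) := by
      rw [hMdef]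
      simp only [add_mul, smul_mul_assoc, mul_add,
        entries_central_smul_right matA_central, entries_central_smul_right matB_central,
        entries_central_smul_right matC_central, smul_smul]
      abel
    have hcx : c * x = y * z - z * y := by rw [hcmul x]; exact hyz.symm
    have hcy : c * y = z * x - x * z := by rw [hcmul y]; exact hzx.symm
    have hcz : c * z = x * y - y * x := by rw [hcmul z]; exact hxy.symm
    have e2 : qv • (1 : Matrix (Fin 4) (Fin 4) R) + c • M
        = qv • 1 + (y*z - z*y) • matA R + (z*x - x*z) • matB R + (x*y - y*x) • matC R := by
      rw [hMdef]
      simp only [smul_add, smul_smul, hcx, hcy, hcz]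
      abel
    rw [e1, e2, matAA, matAB, matAC, matBA, matBB, matBC, matCA, matCB, matCC, ← hqveq]
    simp only [smul_neg, sub_smul, neg_smul, add_smul]
    abel
  -- decomposition of Tμ
  have hA1R : μinv * (μ * μ - (4 * hb ^ 2) • (1 : R)) = μinv * (μ * μ + c * c) := by
    rw [hccval, neg_smul, ← sub_eq_add_neg]
  have hB1M : (-(c * μinv + c * μinv)) • M = -((4 * Complex.I * hb) • (μinv • M)) := by
    rw [hcmul μinv, ← add_smul,
      show (2 * Complex.I * hb + 2 * Complex.I * hb : ℂ) = 4 * Complex.I * hb from by ring,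
      neg_smul, smul_assoc]
  have hTdec : Tμ = (μinv * (μ * μ + c * c)) • (1 : Matrix (Fin 4) (Fin 4) R)
      + (-(c * μinv + c * μinv)) • M := by
    show (μinv * (μ * μ - (4 * hb ^ 2) • (1 : R))) • (1 : Matrix (Fin 4) (Fin 4) R)
        - (4 * Complex.I * hb) • (μinv • M) = _
    rw [hA1R, hB1M, ← sub_eq_add_neg]
  -- centrality of the two coefficients of Tμ
  have hA1mem : μinv * (μ * μ + c * c) ∈ Subalgebra.center ℂ R :=
    mul_mem hnz (add_mem (mul_mem hmz hmz) (mul_mem hgz hgz))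
  have hB1mem : -(c * μinv + c * μinv) ∈ Subalgebra.center ℂ R :=
    neg_mem (add_mem (mul_mem hgz hnz) (mul_mem hgz hnz))
  have hA1c : ∀ s : R, (μinv * (μ * μ + c * c)) * s = s * (μinv * (μ * μ + c * c)) :=
    fun s => (Subalgebra.mem_center_iff.mp hA1mem s).symm
  have hB1c : ∀ s : R, (-(c * μinv + c * μinv)) * s = s * (-(c * μinv + c * μinv)) :=
    fun s => (Subalgebra.mem_center_iff.mp hB1mem s).symm
  -- key multiplication lemma
  have key : ∀ (a b A B : R), (∀ s : R, A * s = s * A) → (∀ s : R, B * s = s * B) →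
      (a • (1 : Matrix (Fin 4) (Fin 4) R) + b • M)
          * (A • (1 : Matrix (Fin 4) (Fin 4) R) + B • M)
        = (a * A + b * (B * qv)) • (1 : Matrix (Fin 4) (Fin 4) R)
          + (a * B + b * A + b * (B * c)) • M := by
    intro a b A B hA hB
    have t3 : M * (A • (1 : Matrix (Fin 4) (Fin 4) R)) = A • M := by
      rw [central_smul_right hA, mul_one]
    have t4 : M * (B • M) = B • (M * M) := central_smul_right hB M M
    rw [mul_add, add_mul, add_mul, smul_mul_assoc, smul_mul_assoc, smul_mul_assoc,
      smul_mul_assoc, one_mul, one_mul, t3, t4, hMM]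
    simp only [smul_add, smul_smul, add_smul]
    abel
  -- the induction
  intro p
  induction p with
  | zero =>
    have hbase : (((1 : ℂ)/2) • μinv) * ((μ + c) + (μ - c)) = 1 := by
      have h2 : (μ + c) + (μ - c) = μ + μ := by abel
      rw [h2, smul_mul_assoc, mul_add, hinv₂, ← two_smul ℂ (1 : R), smul_smul]
      norm_num
    simp only [pow_zero, zero_add, pow_one, sub_self, mul_zero, zero_smul, add_zero,
      hbase, one_smul]
  | succ p ih =>
    -- scalar identities lifted from the center
    have e1 : ((((1 : ℂ)/2) • μinv) * ((μ + c) ^ p * (μ + c) + (μ - c) ^ p * (μ - c)))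
          * (μinv * (μ * μ + c * c))
        + (μinv * ((μ - c) ^ p - (μ + c) ^ p)) * ((-(c * μinv + c * μinv)) * qv)
        = (((1 : ℂ)/2) • μinv)
            * ((μ + c) ^ p * (μ + c) * (μ + c) + (μ - c) ^ p * (μ - c) * (μ - c)) := by
      have h := stepA' mz nz dz gz qz (mz + gz) (mz - gz) ((mz + gz) ^ p) ((mz - gz) ^ p)
        h1z h2z h3z rfl rfl
      have h' := congrArg Subtype.val h
      simp only [Subalgebra.coe_mul, Subalgebra.coe_add, Subalgebra.coe_pow,
        AddSubgroupClass.coe_sub, NegMemClass.coe_neg] at h'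
      exact h'
    have e2 : ((((1 : ℂ)/2) • μinv) * ((μ + c) ^ p * (μ + c) + (μ - c) ^ p * (μ - c)))
          * (-(c * μinv + c * μinv))
        + (μinv * ((μ - c) ^ p - (μ + c) ^ p)) * (μinv * (μ * μ + c * c))
        + (μinv * ((μ - c) ^ p - (μ + c) ^ p)) * ((-(c * μinv + c * μinv)) * c)
        = μinv * ((μ - c) ^ p * (μ - c) - (μ + c) ^ p * (μ + c)) := by
      have h := stepB' mz nz dz gz (mz + gz) (mz - gz) ((mz + gz) ^ p) ((mz - gz) ^ p)
        h1z h2z rfl rfl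
      have h' := congrArg Subtype.val h
      simp only [Subalgebra.coe_mul, Subalgebra.coe_add, Subalgebra.coe_pow,
        AddSubgroupClass.coe_sub, NegMemClass.coe_neg] at h'
      exact h'
    rw [pow_succ, ih, hTdec, key _ _ _ _ hA1c hB1c]
    simp only [pow_succ]
    rw [e1, e2]
end

section
/- Let R be an associative unital ℂ-algebra containing elements x, y, z satisfying xy − yx = 2iħz, yz − zy = 2iħx, zx − xz = 2iħy (ħ ∈ ℂ), and a central invertible element r̂ (the quantum radius) commuting with x, y, z such that r̂² = x² + y² + z² + ħ². Let M = xA + yB + zC with A, B, C the 4×4 matrices A = [[0,1,0,0],[−1,0,0,0],[0,0,0,−1],[0,0,1,0]], B = [[0,0,1,0],[0,0,0,1],[−1,0,0,0],[0,−1,0,0]], C = [[0,0,0,1],[0,0,−1,0],[0,1,0,0],[−1,0,0,0]]. Then the matrix T(r̂) := r̂⁻¹(r̂² + ħ²)·I + iħr̂⁻¹·M satisfies T(r̂)² = (x·I + iħA)² + (y·I + iħB)² + (z·I + iħC)² + ħ²·I; i.e. T(r̂)² = T(x)² + T(y)² + T(z)² + ħ²I, so the multiplicative map T sends the element x² + y²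 + z² + ħ² − r̂² to 0 and is well-defined on the central extension 𝒜 = (U(su(2)_h) ⊗ ℂ[t, r̂]) / ⟨x² + y² + z² + ħ² − r̂²⟩. -/
section helpers
variable {S : Type*} [Ring S]

lemma mul_smul_of_comm (s : S) (hs : ∀ t : S, s * t = t * s)
    (M N : Matrix (Fin 4) (Fin 4) S) : M * (s • N) = s • (M * N) := by
  ext i j
  simp only [Matrix.mul_apply, Matrix.smul_apply, smul_eq_mul, Finset.mul_sum]
  exact Finset.sum_congr rfl fun k _ => by rw [← mul_assoc, ← hs, mul_assoc]

lemma cent_entry_mul_smul (P : Matrix (Fin 4) (Fin 4) S)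
    (hP : ∀ i j (t : S), P i j * t = t * P i j) (s : S) (N : Matrix (Fin 4) (Fin 4) S) :
    P * (s • N) = s • (P * N) := by
  ext i j
  simp only [Matrix.mul_apply, Matrix.smul_apply, smul_eq_mul, Finset.mul_sum]
  exact Finset.sum_congr rfl fun k _ => by rw [← mul_assoc, hP, mul_assoc]

lemma sortR {c : S} (hc : ∀ s : S, c * s = s * c) (t : S) : t * c = c * t := (hc t).symm

lemma sortL {c : S} (hc : ∀ s : S, c * s = s * c) (t s : S) :
    t * (c * s) = c * (t * s) := by rw [← mul_assoc, sortR hc, mul_assoc]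

lemma matA_comm (i j : Fin 4) (t : S) : matA S i j * t = t * matA S i j := by
  fin_cases i <;> fin_cases j <;> simp [matA, Matrix.vecHead, Matrix.vecTail]

lemma matB_comm (i j : Fin 4) (t : S) : matB S i j * t = t * matB S i j := by
  fin_cases i <;> fin_cases j <;> simp [matB, Matrix.vecHead, Matrix.vecTail]

lemma matC_comm (i j : Fin 4) (t : S) : matC S i j * t = t * matC S i j := by
  fin_cases i <;> fin_cases j <;> simp [matC, Matrix.vecHead, Matrix.vecTail]

lemma pAA : matA S * matA S = -1 := by
  ext i j; fin_cases i <;> fin_cases j <;>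
    simp [matA, Matrix.mul_apply, Fin.sum_univ_four, Matrix.one_apply, Matrix.vecHead, Matrix.vecTail]
lemma pBB : matB S * matB S = -1 := by
  ext i j; fin_cases i <;> fin_cases j <;>
    simp [matB, Matrix.mul_apply, Fin.sum_univ_four, Matrix.one_apply, Matrix.vecHead, Matrix.vecTail]
lemma pCC : matC S * matC S = -1 := by
  ext i j; fin_cases i <;> fin_cases j <;>
    simp [matC, Matrix.mul_apply, Fin.sum_univ_four, Matrix.one_apply, Matrix.vecHead, Matrix.vecTail]
lemma pAB : matA S * matB S = matC S := by
  ext i j; fin_cases i <;> fin_cases j <;>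
    simp [matA, matB, matC, Matrix.mul_apply, Fin.sum_univ_four, Matrix.vecHead, Matrix.vecTail]
lemma pBA : matB S * matA S = -matC S := by
  ext i j; fin_cases i <;> fin_cases j <;>
    simp [matA, matB, matC, Matrix.mul_apply, Fin.sum_univ_four, Matrix.vecHead, Matrix.vecTail]
lemma pBC : matB S * matC S = matA S := by
  ext i j; fin_cases i <;> fin_cases j <;>
    simp [matA, matB, matC, Matrix.mul_apply, Fin.sum_univ_four, Matrix.vecHead, Matrix.vecTail]
lemma pCB : matC S * matB S = -matA S := by
  ext i j; fin_cases i <;> fin_cases j <;>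
    simp [matA, matB, matC, Matrix.mul_apply, Fin.sum_univ_four, Matrix.vecHead, Matrix.vecTail]
lemma pCA : matC S * matA S = matB S := by
  ext i j; fin_cases i <;> fin_cases j <;>
    simp [matA, matB, matC, Matrix.mul_apply, Fin.sum_univ_four, Matrix.vecHead, Matrix.vecTail]
lemma pAC : matA S * matC S = -matB S := by
  ext i j; fin_cases i <;> fin_cases j <;>
    simp [matA, matB, matC, Matrix.mul_apply, Fin.sum_univ_four, Matrix.vecHead, Matrix.vecTail]

lemma sq_expand (p w : S) (hp : ∀ t : S, p * t = t * p) (hw : ∀ t : S, w * t = t * w)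
    (M : Matrix (Fin 4) (Fin 4) S) :
    (p • (1 : Matrix (Fin 4) (Fin 4) S) + w • M) ^ 2
      = (p * p) • (1 : Matrix (Fin 4) (Fin 4) S)
        + ((p * w) • M + ((w * p) • M + (w * w) • (M * M))) := by
  have c1 := mul_smul_of_comm p hp
  have c2 := mul_smul_of_comm w hw
  simp only [pow_two, add_mul, mul_add, Matrix.smul_mul, Matrix.one_mul,
    Matrix.mul_one, c1, c2, smul_add, smul_smul]
  abel

end helpers

/-- with `x, y, z` satisfying the `su(2)_h` relations (`ħ = hb`) and the
quantum radius `r̂ = r` a central invertible element with `r̂² = x² + y² + z² + ħ²`,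
the matrix `T(r̂) = r̂⁻¹(r̂² + ħ²)I + iħr̂⁻¹M` satisfies
`T(r̂)² = T(x)² + T(y)² + T(z)² + ħ²I`; hence `T` sends `x² + y² + z² + ħ² − r̂²` to 0
and is well-defined on the central extension `𝒜`. -/
theorem T_quantum_radius_consistency
    {R : Type*} [Ring R] [Algebra ℂ R] (hb : ℂ) (x y z r rinv : R)
    (hxy : x * y - y * x = (2 * Complex.I * hb) • z)
    (hyz : y * z - z * y = (2 * Complex.I * hb) • x)
    (hzx : z * x - x * z = (2 * Complex.I * hb) • y)
    (hcentral : ∀ s : R, r * s = s * r)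
    (hinv₁ : r * rinv = 1) (hinv₂ : rinv * r = 1)
    (hrsq : r * r = x * x + y * y + z * z + (hb ^ 2) • (1 : R)) :
    let M : Matrix (Fin 4) (Fin 4) R := x • matA R + y • matB R + z • matC R
    let Tr : Matrix (Fin 4) (Fin 4) R :=
      (rinv * (r * r + (hb ^ 2) • (1 : R))) • (1 : Matrix (Fin 4) (Fin 4) R)
        + (Complex.I * hb) • (rinv • M)
    Tr ^ 2 =
      (x • (1 : Matrix (Fin 4) (Fin 4) R) + (Complex.I * hb) • matA R) ^ 2
        + (y • (1 : Matrix (Fin 4) (Fin 4) R) + (Complex.I * hb) • matB R) ^ 2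
        + (z • (1 : Matrix (Fin 4) (Fin 4) R) + (Complex.I * hb) • matC R) ^ 2
        + (hb ^ 2) • (1 : Matrix (Fin 4) (Fin 4) R) := by
  intro M Tr
  set u : R := algebraMap ℂ R (Complex.I * hb) with hu_def
  set v : R := algebraMap ℂ R (hb ^ 2) with hv_def
  -- basic conversions between ℂ-smul and multiplication by u, v
  have hbv : (hb ^ 2) • (1 : R) = v := by
    rw [hv_def, Algebra.algebraMap_eq_smul_one]
  have hbvM : (hb ^ 2) • (1 : Matrix (Fin 4) (Fin 4) R)
      = v • (1 : Matrix (Fin 4) (Fin 4) R) := (algebraMap_smul R _ _).symm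
  have hbv2 : (hb * hb) • (1 : R) = v := by rw [← hbv]; ring_nf
  have hbvM2 : (hb * hb) • (1 : Matrix (Fin 4) (Fin 4) R)
      = v • (1 : Matrix (Fin 4) (Fin 4) R) := by rw [← hbvM]; ring_nf
  have huM : ∀ N : Matrix (Fin 4) (Fin 4) R, (Complex.I * hb) • N = u • N :=
    fun N => (algebraMap_smul R _ N).symm
  -- centrality facts
  have hc_r : ∀ s : R, r * s = s * r := hcentral
  have hc_rinv : ∀ s : R, rinv * s = s * rinv := by
    intro s
    calc rinv * s = rinv * s * (r * rinv) := by rw [hinv₁, mul_one]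
      _ = rinv * (s * r) * rinv := by noncomm_ring
      _ = rinv * (r * s) * rinv := by rw [← hcentral s]
      _ = rinv * r * (s * rinv) := by noncomm_ring
      _ = s * rinv := by rw [hinv₂, one_mul]
  have hc_u : ∀ s : R, u * s = s * u := fun s => Algebra.commutes _ s
  have hc_v : ∀ s : R, v * s = s * v := fun s => Algebra.commutes _ s
  -- the key square relation for u
  have huu : u * u = -v := by
    rw [hu_def, hv_def, ← map_mul, ← map_neg]
    congr 1
    rw [mul_mul_mul_comm, Complex.I_mul_I]
    ring
  have huu' : ∀ t : R, u * (u * t) = -(v * t) := by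
    intro t; rw [← mul_assoc, huu, neg_mul]
  -- inverse cancellation
  have hinv₂' : ∀ t : R, rinv * (r * t) = t := by
    intro t; rw [← mul_assoc, hinv₂, one_mul]
  -- commutator rewrites
  have hsm : ∀ w : R, (2 * Complex.I * hb) • w = u * w + u * w := by
    intro w
    rw [show (2 : ℂ) * Complex.I * hb = Complex.I * hb + Complex.I * hb by ring,
      add_smul, Algebra.smul_def]
  have hyx : y * x = x * y - (u * z + u * z) := by
    rw [← hsm z, ← hxy]; noncomm_ring
  have hzy : z * y = y * z - (u * x + u * x) := by
    rw [← hsm x, ← hyz]; noncomm_ring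
  have hxz : x * z = z * x - (u * y + u * y) := by
    rw [← hsm y, ← hzx]; noncomm_ring
  -- sorting rules (atom order: rinv < r < u < v < x < y < z)
  have s_rinv := fun (t : R) => sortR hc_rinv t
  have s_rinv' := fun (t s : R) => sortL hc_rinv t s
  have s_r_u : u * r = r * u := sortR hc_r u
  have s_r_u' := fun (t : R) => sortL hc_r u t
  have s_r_v : v * r = r * v := sortR hc_r v
  have s_r_v' := fun (t : R) => sortL hc_r v t
  have s_r_x : x * r = r * x := sortR hc_r x
  have s_r_x' := fun (t : R) => sortL hc_r x t
  have s_r_y : y * r = r * y := sortR hc_r y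
  have s_r_y' := fun (t : R) => sortL hc_r y t
  have s_r_z : z * r = r * z := sortR hc_r z
  have s_r_z' := fun (t : R) => sortL hc_r z t
  have s_u_v : v * u = u * v := sortR hc_u v
  have s_u_v' := fun (t : R) => sortL hc_u v t
  have s_u_x : x * u = u * x := sortR hc_u x
  have s_u_x' := fun (t : R) => sortL hc_u x t
  have s_u_y : y * u = u * y := sortR hc_u y
  have s_u_y' := fun (t : R) => sortL hc_u y t
  have s_u_z : z * u = u * z := sortR hc_u z
  have s_u_z' := fun (t : R) => sortL hc_u z t
  have s_v_x : x * v = v * x := sortR hc_v x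
  have s_v_x' := fun (t : R) => sortL hc_v x t
  have s_v_y : y * v = v * y := sortR hc_v y
  have s_v_y' := fun (t : R) => sortL hc_v y t
  have s_v_z : z * v = v * z := sortR hc_v z
  have s_v_z' := fun (t : R) => sortL hc_v z t
  -- matrices with central entries commute with scalar multiples
  have centA := fun (s : R) (N : Matrix (Fin 4) (Fin 4) R) =>
    cent_entry_mul_smul (matA R) matA_comm s N
  have centB := fun (s : R) (N : Matrix (Fin 4) (Fin 4) R) =>
    cent_entry_mul_smul (matB R) matB_comm s N
  have centC := fun (s : R) (N : Matrix (Fin 4) (Fin 4) R) =>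
    cent_entry_mul_smul (matC R) matC_comm s N
  -- centrality of the compound coefficients
  have mulc : ∀ a b : R, (∀ t, a * t = t * a) → (∀ t, b * t = t * b) →
      ∀ t : R, (a * b) * t = t * (a * b) := by
    intro a b ha hb t; rw [mul_assoc, hb, ← mul_assoc, ha, mul_assoc]
  have addc : ∀ a b : R, (∀ t, a * t = t * a) → (∀ t, b * t = t * b) →
      ∀ t : R, (a + b) * t = t * (a + b) := by
    intro a b ha hb t; rw [add_mul, ha, hb, mul_add]
  have hq_c : ∀ t : R, (rinv * (r * r + v)) * t = t * (rinv * (r * r + v)) :=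
    mulc _ _ hc_rinv (addc _ _ (mulc _ _ hc_r hc_r) hc_v)
  have hw_c : ∀ t : R, (u * rinv) * t = t * (u * rinv) := mulc _ _ hc_u hc_rinv
  have c1 := fun (X Y : Matrix (Fin 4) (Fin 4) R) =>
    mul_smul_of_comm (rinv * (r * r + v)) hq_c X Y
  have c2 := fun (X Y : Matrix (Fin 4) (Fin 4) R) =>
    mul_smul_of_comm (u * rinv) hw_c X Y
  -- Step 1: expand Tr² keeping M atomic
  have step : Tr ^ 2 =
      ((rinv * (r * r + v)) * (rinv * (r * r + v))) • (1 : Matrix (Fin 4) (Fin 4) R)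
        + ((rinv * (r * r + v)) * (u * rinv)) • M
        + ((u * rinv) * (rinv * (r * r + v))) • M
        + ((u * rinv) * (u * rinv)) • (M * M) := by
    have hTr : Tr = (rinv * (r * r + v)) • (1 : Matrix (Fin 4) (Fin 4) R)
        + (u * rinv) • M := by
      unfold Tr
      rw [hbv, huM, smul_smul]
    rw [hTr, sq_expand _ _ hq_c hw_c]
    abel
  -- Step 2: M * M
  have hM2 : M * M = (v - r * r) • (1 : Matrix (Fin 4) (Fin 4) R)
      + ((u * x + u * x) • matA R
      + ((u * y + u * y) • matB R + (u * z + u * z) • matC R)) := by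
    unfold M
    rw [hrsq]
    simp only [hbv, hyx, hzy, hxz, Matrix.smul_mul, Matrix.one_mul, Matrix.mul_one,
      centA, centB, centC, pAA, pAB, pAC, pBA, pBB, pBC, pCA, pCB, pCC,
      smul_smul, smul_add, add_smul, smul_sub, sub_smul, smul_neg, neg_smul,
      neg_neg, mul_add, add_mul, mul_sub, sub_mul, mul_neg, neg_mul, mul_assoc,
      mul_one, one_mul,
      s_rinv, s_rinv', s_r_u, s_r_u', s_r_v, s_r_v', s_r_x, s_r_x', s_r_y, s_r_y',
      s_r_z, s_r_z', s_u_v, s_u_v', s_u_x, s_u_x', s_u_y, s_u_y', s_u_z, s_u_z',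
      s_v_x, s_v_x', s_v_y, s_v_y', s_v_z, s_v_z', hinv₂, hinv₂', huu, huu']
    abel
  -- Step 3: full normal form of Tr²
  have hL : Tr ^ 2 = (r * r) • (1 : Matrix (Fin 4) (Fin 4) R)
      + (v • (1 : Matrix (Fin 4) (Fin 4) R) + v • (1 : Matrix (Fin 4) (Fin 4) R)
        + v • (1 : Matrix (Fin 4) (Fin 4) R))
      + ((u * x) • matA R + (u * x) • matA R
      + ((u * y) • matB R + (u * y) • matB R)
      + ((u * z) • matC R + (u * z) • matC R)) := by
    rw [step, hM2]
    unfold M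
    simp only [Matrix.smul_mul, Matrix.one_mul, Matrix.mul_one,
      centA, centB, centC,
      smul_smul, smul_add, add_smul, smul_sub, sub_smul, smul_neg, neg_smul,
      neg_neg, mul_add, add_mul, mul_sub, sub_mul, mul_neg, neg_mul, mul_assoc,
      mul_one, one_mul,
      s_rinv, s_rinv', s_r_u, s_r_u', s_r_v, s_r_v', s_r_x, s_r_x', s_r_y, s_r_y',
      s_r_z, s_r_z', s_u_v, s_u_v', s_u_x, s_u_x', s_u_y, s_u_y', s_u_z, s_u_z',
      s_v_x, s_v_x', s_v_y, s_v_y', s_v_z, s_v_z', hinv₂, hinv₂', huu, huu']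
    abel
  -- Finish
  rw [hL, hrsq]
  simp only [hbv, hbv2, hbvM, hbvM2, huM, pow_two, Matrix.smul_mul, Matrix.one_mul, Matrix.mul_one,
    centA, centB, centC, pAA, pBB, pCC,
    smul_smul, smul_add, add_smul, smul_sub, sub_smul, smul_neg, neg_smul,
    neg_neg, mul_add, add_mul, mul_sub, sub_mul, mul_neg, neg_mul, mul_assoc,
    mul_one, one_mul,
    s_u_x, s_u_x', s_u_y, s_u_y', s_u_z, s_u_z', huu, huu']
  abel
end

section
/- Let R be an associative unital ℂ-algebra containing elements x, y, z satisfying xy − yx = 2iħz, yz − zy = 2iħx, zx − xz = 2iħy (ħ ∈ ℂ), and a central invertible element r̂ commuting with x, y, z such that r̂² = x² + y² + z² + ħ². Then the 2×2 matrix 𝒟(r̂) := r̂⁻¹·[[r̂² + ħ² − ħz, −ħ(x + iy)],[−ħ(x − iy), r̂² + ħ² + ħz]] over R satisfies the Cayley–Hamilton identity 𝒟(r̂)² − 2r̂·𝒟(r̂) + (r̂² − ħ²)·I = 0, equivalently in factorized form (𝒟(r̂) − (r̂ + ħ)·I)(𝒟(r̂) − (r̂ − ħ)·I) = 0. -/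
/-- with `x, y, z` satisfying the `su(2)_h` relations (`ħ = hb`) and the
quantum radius `r̂ = r` a central invertible element with `r̂² = x² + y² + z² + ħ²`,
the matrix `𝒟(r̂) = r̂⁻¹[[r̂² + ħ² − ħz, −ħ(x + iy)],[−ħ(x − iy), r̂² + ħ² + ħz]]`
satisfies the Cayley–Hamilton identity `𝒟(r̂)² − 2r̂𝒟(r̂) + (r̂² − ħ²)I = 0`, equivalently
`(𝒟(r̂) − (r̂ + ħ)I)(𝒟(r̂) − (r̂ − ħ)I) = 0`. -/
theorem CayleyHamilton_for_D_radius
    {R : Type*} [Ring R] [Algebra ℂ R] (hb : ℂ) (x y z r rinv : R)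
    (hxy : x * y - y * x = (2 * Complex.I * hb) • z)
    (hyz : y * z - z * y = (2 * Complex.I * hb) • x)
    (hzx : z * x - x * z = (2 * Complex.I * hb) • y)
    (hcentral : ∀ s : R, r * s = s * r)
    (hinv₁ : r * rinv = 1) (hinv₂ : rinv * r = 1)
    (hrsq : r * r = x * x + y * y + z * z + (hb ^ 2) • (1 : R)) :
    let Dr : Matrix (Fin 2) (Fin 2) R :=
      rinv • !![r * r + (hb ^ 2) • (1 : R) - hb • z, (-hb) • (x + Complex.I • y);
                (-hb) • (x - Complex.I • y), r * r + (hb ^ 2) • (1 : R) + hb • z]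
    (Dr ^ 2 - ((2 : ℂ) • r) • Dr
        + (r * r - (hb ^ 2) • (1 : R)) • (1 : Matrix (Fin 2) (Fin 2) R) = 0)
    ∧ (Dr - (r + hb • (1 : R)) • (1 : Matrix (Fin 2) (Fin 2) R))
        * (Dr - (r - hb • (1 : R)) • (1 : Matrix (Fin 2) (Fin 2) R)) = 0 := by
  intro Dr
  -- swap lemmas
  have h1 : x * y = (2 * Complex.I * hb) • z + y * x := by rw [← hxy]; abel
  have h2 : z * x = (2 * Complex.I * hb) • y + x * z := by rw [← hzx]; abel
  have h3 : z * y = y * z - (2 * Complex.I * hb) • x := by rw [← hyz]; abel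
  -- rinv is central
  have hrinv : ∀ s : R, rinv * s = s * rinv := by
    intro s
    have h := congrArg (fun t => rinv * t * rinv) (hcentral s)
    simp only [← mul_assoc] at h
    rw [hinv₂, one_mul, mul_assoc (rinv * s) r rinv, hinv₁, mul_one] at h
    exact h.symm
  -- central multiplication lemma for matrices
  have cen_mul : ∀ (c : R), (∀ s : R, c * s = s * c) →
      ∀ M N : Matrix (Fin 2) (Fin 2) R, M * (c • N) = c • (M * N) := by
    intro c hc M N
    ext i j
    simp only [Matrix.mul_apply, Matrix.smul_apply, smul_eq_mul, Finset.mul_sum]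
    refine Finset.sum_congr rfl fun k _ => ?_
    rw [← mul_assoc, ← hc, mul_assoc]
  set B : Matrix (Fin 2) (Fin 2) R :=
    !![z, x + Complex.I • y; x - Complex.I • y, -z] with hBdef
  set c : R := r * r + (hb ^ 2) • (1 : R) with hcdef
  have hcc : ∀ s : R, c * s = s * c := by
    intro s
    simp only [hcdef, add_mul, mul_add, smul_mul_assoc, mul_smul_comm, one_mul, mul_one]
    have hrr : r * r * s = s * (r * r) := by
      rw [mul_assoc, hcentral s, ← mul_assoc, hcentral s, mul_assoc]
    rw [hrr]
  set A : Matrix (Fin 2) (Fin 2) R :=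
    !![r * r + (hb ^ 2) • (1 : R) - hb • z, (-hb) • (x + Complex.I • y);
       (-hb) • (x - Complex.I • y), r * r + (hb ^ 2) • (1 : R) + hb • z] with hAdef
  have hDr : Dr = rinv • A := rfl
  have hA : A = c • (1 : Matrix (Fin 2) (Fin 2) R) - hb • B := by
    ext i j
    fin_cases i <;> fin_cases j <;>
      simp [hAdef, hBdef, hcdef, Matrix.one_apply, smul_eq_mul, neg_smul, smul_neg,
        sub_eq_add_neg] <;> abel
  have hs : x * x + y * y + z * z = r * r - (hb ^ 2) • (1 : R) := by rw [hrsq]; abel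
  have hB2 : B * B = (r * r - (hb ^ 2) • (1 : R)) • (1 : Matrix (Fin 2) (Fin 2) R)
      + (2 * hb) • B := by
    rw [← hs, hBdef]
    ext i j
    fin_cases i <;> fin_cases j <;>
      simp [Matrix.mul_apply, Fin.sum_univ_two, Matrix.one_apply] <;>
      (simp only [mul_sub, sub_mul, mul_add, add_mul, mul_smul_comm, smul_mul_assoc,
          smul_smul, smul_add, smul_sub, h1, h2, h3];
       match_scalars <;> ring_nf <;> simp [Complex.I_sq] <;> ring_nf)
  -- products with scalar matrices
  have p1 : (c • (1 : Matrix (Fin 2) (Fin 2) R)) * (c • (1 : Matrix (Fin 2) (Fin 2) R))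
      = (c * c) • (1 : Matrix (Fin 2) (Fin 2) R) := by
    rw [smul_mul_assoc, cen_mul c hcc, smul_smul, one_mul]
  have p2 : (c • (1 : Matrix (Fin 2) (Fin 2) R)) * (hb • B) = hb • (c • B) := by
    rw [smul_mul_assoc, one_mul]
    exact (smul_comm hb c B).symm
  have p3 : (hb • B) * (c • (1 : Matrix (Fin 2) (Fin 2) R)) = hb • (c • B) := by
    rw [cen_mul c hcc, mul_one]
    exact smul_comm c hb B
  have p4 : (hb • B) * (hb • B) = (hb * hb) • (B * B) := by
    rw [smul_mul_assoc, mul_smul_comm, smul_smul]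
  have hAA : A * A = (r * r) • ((2 : ℂ) • A
      - (r * r - (hb ^ 2) • (1 : R)) • (1 : Matrix (Fin 2) (Fin 2) R)) := by
    have e : A * A = (c * c) • (1 : Matrix (Fin 2) (Fin 2) R) - hb • (c • B)
        - (hb • (c • B) - (hb * hb) • ((r * r - (hb ^ 2) • (1 : R)) •
            (1 : Matrix (Fin 2) (Fin 2) R) + (2 * hb) • B)) := by
      rw [hA, sub_mul, mul_sub, mul_sub, p1, p2, p3, p4, hB2]
    rw [e, hA, hcdef]
    ext i j
    fin_cases i <;> fin_cases j <;>
      simp [Matrix.one_apply, mul_add, add_mul, mul_sub, sub_mul, smul_mul_assoc,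
        mul_smul_comm, smul_smul, one_mul, mul_one, smul_sub, smul_add] <;>
      module
  have f1 : rinv * rinv * (r * r) = 1 := by
    rw [mul_assoc, ← mul_assoc rinv r r, hinv₂, one_mul, hinv₂]
  have key : Dr * Dr = ((2 : ℂ) • r) • Dr
      - (r * r - (hb ^ 2) • (1 : R)) • (1 : Matrix (Fin 2) (Fin 2) R) := by
    have q1 : Dr * Dr = (rinv * rinv) • (A * A) := by
      rw [hDr, smul_mul_assoc, cen_mul rinv hrinv, smul_smul]
    have q2 : ((2 : ℂ) • r) • Dr = (2 : ℂ) • A := by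
      rw [hDr, smul_smul, smul_mul_assoc, hinv₁, smul_one_smul]
    rw [q1, hAA, smul_smul, f1, one_smul, q2]
  constructor
  · rw [pow_two, key]; abel
  · have hbc : ∀ s : R, (r - hb • (1 : R)) * s = s * (r - hb • (1 : R)) := by
      intro s
      simp only [sub_mul, mul_sub, smul_mul_assoc, mul_smul_comm, one_mul, mul_one,
        hcentral s]
    have hab : (r + hb • (1 : R)) * (r - hb • (1 : R)) = r * r - (hb ^ 2) • (1 : R) := by
      simp only [mul_sub, add_mul, smul_mul_assoc, mul_smul_comm, smul_smul, one_mul,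
        mul_one]
      module
    have hsum : ((2 : ℂ) • r) = (r + hb • (1 : R)) + (r - hb • (1 : R)) := by module
    have e1 : Dr * ((r - hb • (1 : R)) • (1 : Matrix (Fin 2) (Fin 2) R))
        = (r - hb • (1 : R)) • Dr := by rw [cen_mul _ hbc, mul_one]
    have e2 : ((r + hb • (1 : R)) • (1 : Matrix (Fin 2) (Fin 2) R)) * Dr
        = (r + hb • (1 : R)) • Dr := by rw [smul_mul_assoc, one_mul]
    have e3 : ((r + hb • (1 : R)) • (1 : Matrix (Fin 2) (Fin 2) R))
        * ((r - hb • (1 : R)) • (1 : Matrix (Fin 2) (Fin 2) R))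
        = (r * r - (hb ^ 2) • (1 : R)) • (1 : Matrix (Fin 2) (Fin 2) R) := by
      rw [smul_mul_assoc, one_mul, smul_smul, hab]
    rw [sub_mul, mul_sub, mul_sub, e1, e2, e3, key, hsum, add_smul]
    abel
end

section
/- Let R be an associative unital ℂ-algebra containing elements x, y, z satisfying xy − yx = 2iħz, yz − zy = 2iħx, zx − xz = 2iħy (ħ ∈ ℂ), and let α₁, α₂, α₃ ∈ ℂ. Set b = α₁x + α₂y + α₃z, N = [[α₃, α₁ + iα₂],[α₁ − iα₂, −α₃]], M₂ = [[z, x + iy],[x − iy, −z]], and 𝒟(b) = b·I − ħN in the 2×2 matrices over R. Then 𝒟(b) commutes with M₂: (b·I − ħN)·M₂ = M₂·(b·I − ħN). Consequently, if r̂ is a central invertible element commuting with x, y, z with r̂² = x² + y² + z² + ħ², then 𝒟(b) commutes with 𝒟(r̂) = r̂⁻¹((r̂² + ħ²)·I − ħM₂). -/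
/-- with `x, y, z` satisfying the `su(2)_h` relations (`ħ = hb`),
`b = α₁x + α₂y + α₃z`, `N = [[α₃, α₁ + iα₂],[α₁ − iα₂, −α₃]]` and
`M₂ = [[z, x + iy],[x − iy, −z]]`, the matrix `𝒟(b) = bI − ħN` commutes with `M₂`;
consequently, for a central invertible quantum radius `r̂ = r` with
`r̂² = x² + y² + z² + ħ²`, `𝒟(b)` commutes with `𝒟(r̂) = r̂⁻¹((r̂² + ħ²)I − ħM₂)`. -/
theorem D_b_commutes_with_D_radius
    {R : Type*} [Ring R] [Algebra ℂ R] (hb : ℂ) (α₁ α₂ α₃ : ℂ) (x y z : R)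
    (hxy : x * y - y * x = (2 * Complex.I * hb) • z)
    (hyz : y * z - z * y = (2 * Complex.I * hb) • x)
    (hzx : z * x - x * z = (2 * Complex.I * hb) • y) :
    let b : R := α₁ • x + α₂ • y + α₃ • z
    let Nmat : Matrix (Fin 2) (Fin 2) R :=
      !![algebraMap ℂ R α₃, algebraMap ℂ R (α₁ + Complex.I * α₂);
         algebraMap ℂ R (α₁ - Complex.I * α₂), algebraMap ℂ R (-α₃)]
    let M₂ : Matrix (Fin 2) (Fin 2) R :=
      !![z, x + Complex.I • y; x - Complex.I • y, -z]
    let Db : Matrix (Fin 2) (Fin 2) R := b • (1 : Matrix (Fin 2) (Fin 2) R) - hb • Nmat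
    Db * M₂ = M₂ * Db ∧
    ∀ r rinv : R, (∀ s : R, r * s = s * r) → r * rinv = 1 → rinv * r = 1 →
      r * r = x * x + y * y + z * z + (hb ^ 2) • (1 : R) →
      Db * (rinv • ((r * r + (hb ^ 2) • (1 : R)) • (1 : Matrix (Fin 2) (Fin 2) R) - hb • M₂))
        = (rinv • ((r * r + (hb ^ 2) • (1 : R)) • (1 : Matrix (Fin 2) (Fin 2) R) - hb • M₂)) * Db := by
  intro b Nmat M₂ Db
  set c : ℂ := 2 * Complex.I * hb with hc
  have hxy1 : x * y = y * x + c • z := by rw [← hxy]; abel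
  have hzy1 : z * y = y * z - c • x := by rw [← hyz]; abel
  have hzx1 : z * x = x * z + c • y := by rw [← hzx]; abel
  have hxy' : ∀ t : R, x * (y * t) = y * (x * t) + c • (z * t) := by
    intro t; rw [← mul_assoc, hxy1, add_mul, smul_mul_assoc, mul_assoc]
  have hzy' : ∀ t : R, z * (y * t) = y * (z * t) - c • (x * t) := by
    intro t; rw [← mul_assoc, hzy1, sub_mul, smul_mul_assoc, mul_assoc]
  have hzx' : ∀ t : R, z * (x * t) = x * (z * t) + c • (y * t) := by
    intro t; rw [← mul_assoc, hzx1, add_mul, smul_mul_assoc, mul_assoc]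
  -- main commutation `Db * M₂ = M₂ * Db`
  have hmain : Db * M₂ = M₂ * Db := by
    ext i j
    fin_cases i <;> fin_cases j <;>
      simp only [Db, Nmat, M₂, b, Matrix.mul_apply, Fin.sum_univ_two,
        Matrix.sub_apply, Matrix.smul_apply, Matrix.one_apply, Matrix.of_apply,
        Matrix.cons_val', Matrix.cons_val_zero, Matrix.cons_val_one,
        Matrix.head_cons, Matrix.head_fin_const, Matrix.empty_val',
        Matrix.cons_val_fin_one, Fin.isValue, Fin.zero_eta, Fin.mk_one,
        if_true, if_false, one_ne_zero, zero_ne_one, ite_true, ite_false,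
        Algebra.algebraMap_eq_smul_one, smul_eq_mul] <;>
      simp only [mul_add, add_mul, mul_sub, sub_mul, mul_assoc, hxy1, hzy1, hzx1,
        hxy', hzy', hzx', smul_add, smul_sub, mul_smul_comm, smul_mul_assoc,
        smul_smul, mul_one, one_mul, mul_neg, neg_mul, mul_zero, zero_mul,
        smul_zero, zero_smul, sub_zero, zero_sub, add_zero, zero_add] <;>
      match_scalars <;> ring_nf <;> simp only [hc, Complex.I_sq] <;> ring_nf <;> simp only [Complex.I_sq] <;> ring_nf
  refine ⟨hmain, ?_⟩
  intro r rinv hrcen hr1 hr2 hr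
  -- `rinv` is central
  have hrinv : ∀ s : R, rinv * s = s * rinv := by
    intro s
    calc rinv * s = rinv * (s * (r * rinv)) := by rw [hr1, mul_one]
    _ = rinv * (r * (s * rinv)) := by rw [← mul_assoc s r, ← hrcen s, mul_assoc]
    _ = (rinv * r) * (s * rinv) := by rw [mul_assoc]
    _ = s * rinv := by rw [hr2, one_mul]
  set S : R := r * r + (hb ^ 2 : ℂ) • (1 : R) with hS
  -- `b` commutes with `S`
  have hbS : (α₁ • x + α₂ • y + α₃ • z) * S = S * (α₁ • x + α₂ • y + α₃ • z) := by
    rw [hS, hr]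
    simp only [mul_add, add_mul, mul_sub, sub_mul, mul_assoc, hxy1, hzy1, hzx1,
      hxy', hzy', hzx', smul_add, smul_sub, mul_smul_comm, smul_mul_assoc,
      smul_smul, mul_one, one_mul]
    module
  have hsc : ∀ (β : ℂ), (β • (1 : R)) * S = S * (β • (1 : R)) := by
    intro β; rw [smul_mul_assoc, one_mul, mul_smul_comm, mul_one]
  -- every entry of Db commutes with S
  have hDbS : ∀ i j, Db i j * S = S * Db i j := by
    intro i j
    fin_cases i <;> fin_cases j <;>
      simp only [Db, Nmat, b, Matrix.sub_apply, Matrix.smul_apply, Matrix.one_apply,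
        Matrix.of_apply, Matrix.cons_val', Matrix.cons_val_zero, Matrix.cons_val_one,
        Matrix.head_cons, Matrix.head_fin_const, Matrix.empty_val',
        Matrix.cons_val_fin_one, Fin.isValue, Fin.zero_eta, Fin.mk_one,
        if_true, if_false, one_ne_zero, zero_ne_one, ite_true, ite_false,
        Algebra.algebraMap_eq_smul_one, smul_eq_mul, mul_one, one_mul, mul_zero,
        zero_mul, sub_mul, mul_sub, zero_sub, neg_mul, mul_neg, smul_mul_assoc,
        mul_smul_comm, hbS, hsc, smul_zero, sub_zero, neg_inj]
  -- Db commutes with A := S • 1 - hb • M₂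
  set A : Matrix (Fin 2) (Fin 2) R := S • (1 : Matrix (Fin 2) (Fin 2) R) - hb • M₂ with hA
  have hscalar : Db * (S • (1 : Matrix (Fin 2) (Fin 2) R))
      = (S • (1 : Matrix (Fin 2) (Fin 2) R)) * Db := by
    ext i j
    simp only [Matrix.mul_apply, Fin.sum_univ_two, Matrix.smul_apply, Matrix.one_apply,
      smul_eq_mul, mul_ite, ite_mul, mul_zero, zero_mul, mul_one, one_mul]
    fin_cases i <;> fin_cases j <;>
      simp only [Fin.isValue, Fin.zero_eta, Fin.mk_one, if_true, if_false,
        one_ne_zero, zero_ne_one, ite_true, ite_false, add_zero, zero_add] <;>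
      exact hDbS _ _
  have hDbA : Db * A = A * Db := by
    rw [hA, mul_sub, hscalar, Matrix.mul_smul, hmain, ← Matrix.smul_mul, ← sub_mul]
  -- conclude
  ext i j
  simp only [Matrix.mul_apply, Fin.sum_univ_two, Matrix.smul_apply, Matrix.sub_apply,
    smul_eq_mul]
  have e1 : ∀ k, Db i k * (rinv * A k j) = rinv * (Db i k * A k j) := by
    intro k; rw [← mul_assoc, ← hrinv (Db i k), mul_assoc]
  have e2 : ∀ k, rinv * A i k * Db k j = rinv * (A i k * Db k j) := by
    intro k; rw [mul_assoc]
  rw [e1 0, e1 1, e2 0, e2 1, ← mul_add, ← mul_add]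
  have hentry : Db i 0 * A 0 j + Db i 1 * A 1 j = A i 0 * Db 0 j + A i 1 * Db 1 j := by
    have := congrFun (congrFun hDbA i) j
    simpa only [Matrix.mul_apply, Fin.sum_univ_two] using this
  rw [hentry]
end

section
/- Let R be an associative unital ring containing a central element ħ, elements X, Y with XY = YX, and central elements ρ, β such that: X² = 2ρX − (ρ² − ħ²), Y² = 2βY − (β² − ħ²), and both ρ − β and (ρ − β)² − 4ħ² are invertible. Set d = (ρ − β)((ρ − β)² − 4ħ²) and a₀ = 2(ρ² + β² − 3βρ − ħ²)d⁻¹, a₁ = (3β − ρ)d⁻¹, a₂ = (3ρ − β)d⁻¹, a₃ = −2d⁻¹. Then (X − Y)(a₀ + a₁X + a₂Y + a₃XY) = 1 = (a₀ + a₁X + a₂Y + a₃XY)(X − Y); i.e. X − Y is invertible with inverse a₀ + a₁X + a₂Y + a₃XY. -/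
/-- in a unital associative ring `R` with a central element `ħ = hb`,
commuting elements `X, Y` and central elements `ρ, β` with
`X² = 2ρX − (ρ² − ħ²)`, `Y² = 2βY − (β² − ħ²)`, if `ρ − β` and `(ρ − β)² − 4ħ²` are
invertible (with inverses `u`, `v`), then `X − Y` is invertible with inverse
`a₀ + a₁X + a₂Y + a₃XY`, where, with `d⁻¹ = u·v`,
`a₀ = 2(ρ² + β² - 3βρ − ħ²)d⁻¹`, `a₁ = (3β − ρ)d⁻¹`, `a₂ = (3ρ − β)d⁻¹`, `a₃ = −2d⁻¹`. -/
theorem inverse_of_X_sub_Y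
    {R : Type*} [Ring R] (hb X Y ρ β u v : R)
    (hhb : ∀ r : R, hb * r = r * hb)
    (hXY : X * Y = Y * X)
    (hρ : ∀ r : R, ρ * r = r * ρ)
    (hβ : ∀ r : R, β * r = r * β)
    (hX : X * X = 2 * (ρ * X) - (ρ ^ 2 - hb ^ 2))
    (hY : Y * Y = 2 * (β * Y) - (β ^ 2 - hb ^ 2))
    (hu₁ : (ρ - β) * u = 1) (hu₂ : u * (ρ - β) = 1)
    (hv₁ : ((ρ - β) ^ 2 - 4 * hb ^ 2) * v = 1) (hv₂ : v * ((ρ - β) ^ 2 - 4 * hb ^ 2) = 1) :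
    let dinv : R := u * v
    let a₀ : R := 2 * (ρ ^ 2 + β ^ 2 - 3 * (β * ρ) - hb ^ 2) * dinv
    let a₁ : R := (3 * β - ρ) * dinv
    let a₂ : R := (3 * ρ - β) * dinv
    let a₃ : R := -2 * dinv
    (X - Y) * (a₀ + a₁ * X + a₂ * Y + a₃ * (X * Y)) = 1 ∧
    (a₀ + a₁ * X + a₂ * Y + a₃ * (X * Y)) * (X - Y) = 1 := by
  intro dinv a₀ a₁ a₂ a₃
  -- `u` is central, being the inverse of the central element `ρ - β`
  have hw : ∀ r : R, (ρ - β) * r = r * (ρ - β) := fun r => by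
    rw [sub_mul, mul_sub, hρ r, hβ r]
  have hu : ∀ r : R, u * r = r * u := fun r => by
    have h1 : u * ((ρ - β) * (r * u)) = r * u := by rw [← mul_assoc, hu₂, one_mul]
    have h2 : (ρ - β) * (r * u) = r * ((ρ - β) * u) := by
      rw [← mul_assoc, hw r, mul_assoc]
    rw [← h1, h2, hu₁, mul_one]
  -- `(ρ - β)^2 - 4 hb^2` is central
  have hc : ∀ r : R, ((ρ - β) ^ 2 - 4 * hb ^ 2) * r = r * ((ρ - β) ^ 2 - 4 * hb ^ 2) :=
    fun r => by
      have hbb : hb ^ 2 * r = r * hb ^ 2 := by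
        rw [pow_two, mul_assoc, hhb r, ← mul_assoc, hhb r, mul_assoc]
      have hww : (ρ - β) ^ 2 * r = r * (ρ - β) ^ 2 := by
        rw [pow_two, mul_assoc, hw r, ← mul_assoc, hw r, mul_assoc]
      have h4 : (4 : R) * r = r * 4 := by
        simpa using (Nat.cast_commute (4 : ℕ) r).eq
      rw [sub_mul, mul_sub, hww, mul_assoc, hbb, ← mul_assoc, h4, mul_assoc]
  -- hence `v` is central too
  have hv : ∀ r : R, v * r = r * v := fun r => by
    have h1 : v * (((ρ - β) ^ 2 - 4 * hb ^ 2) * (r * v)) = r * v := by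
      rw [← mul_assoc, hv₂, one_mul]
    have h2 : ((ρ - β) ^ 2 - 4 * hb ^ 2) * (r * v)
        = r * (((ρ - β) ^ 2 - 4 * hb ^ 2) * v) := by
      rw [← mul_assoc, hc r, mul_assoc]
    rw [← h1, h2, hv₁, mul_one]
  -- all seven generators commute pairwise
  have hcomm : ∀ x ∈ ({hb, ρ, β, u, v, X, Y} : Set R),
      ∀ y ∈ ({hb, ρ, β, u, v, X, Y} : Set R), x * y = y * x := by
    intro x hx y hy
    simp only [Set.mem_insert_iff, Set.mem_singleton_iff] at hx hy
    rcases hx with rfl | rfl | rfl | rfl | rfl | rfl | rfl <;>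
      rcases hy with rfl | rfl | rfl | rfl | rfl | rfl | rfl <;>
      first
        | rfl
        | exact hhb _
        | exact (hhb _).symm
        | exact hρ _
        | exact (hρ _).symm
        | exact hβ _
        | exact (hβ _).symm
        | exact hu _
        | exact (hu _).symm
        | exact hv _
        | exact (hv _).symm
        | exact hXY
        | exact hXY.symm
  letI : CommRing (Subring.closure ({hb, ρ, β, u, v, X, Y} : Set R)) :=
    Subring.closureCommRingOfComm hcomm
  have mhb : hb ∈ Subring.closure ({hb, ρ, β, u, v, X, Y} : Set R) :=
    Subring.subset_closure (by simp)
  have mρ : ρ ∈ Subring.closure ({hb, ρ, β, u, v, X, Y} : Set R) :=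
    Subring.subset_closure (by simp)
  have mβ : β ∈ Subring.closure ({hb, ρ, β, u, v, X, Y} : Set R) :=
    Subring.subset_closure (by simp)
  have mu : u ∈ Subring.closure ({hb, ρ, β, u, v, X, Y} : Set R) :=
    Subring.subset_closure (by simp)
  have mv : v ∈ Subring.closure ({hb, ρ, β, u, v, X, Y} : Set R) :=
    Subring.subset_closure (by simp)
  have mX : X ∈ Subring.closure ({hb, ρ, β, u, v, X, Y} : Set R) :=
    Subring.subset_closure (by simp)
  have mY : Y ∈ Subring.closure ({hb, ρ, β, u, v, X, Y} : Set R) :=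
    Subring.subset_closure (by simp)
  let H := Subring.closure ({hb, ρ, β, u, v, X, Y} : Set R)
  let hb' : H := ⟨hb, mhb⟩
  let ρ' : H := ⟨ρ, mρ⟩
  let β' : H := ⟨β, mβ⟩
  let u' : H := ⟨u, mu⟩
  let v' : H := ⟨v, mv⟩
  let X' : H := ⟨X, mX⟩
  let Y' : H := ⟨Y, mY⟩
  have hX' : X' * X' = 2 * (ρ' * X') - (ρ' ^ 2 - hb' ^ 2) := by
    apply Subtype.ext; push_cast; exact hX
  have hY' : Y' * Y' = 2 * (β' * Y') - (β' ^ 2 - hb' ^ 2) := by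
    apply Subtype.ext; push_cast; exact hY
  have hu' : (ρ' - β') * u' = 1 := by
    apply Subtype.ext; push_cast; exact hu₁
  have hv' : ((ρ' - β') ^ 2 - 4 * hb' ^ 2) * v' = 1 := by
    apply Subtype.ext; push_cast; exact hv₁
  have key : (X' - Y') * (2 * (ρ' ^ 2 + β' ^ 2 - 3 * (β' * ρ') - hb' ^ 2) * (u' * v')
      + (3 * β' - ρ') * (u' * v') * X' + (3 * ρ' - β') * (u' * v') * Y'
      + -2 * (u' * v') * (X' * Y')) = 1 := by
    linear_combination (((3 * β' - ρ') + (-2 : H) * Y') * (u' * v')) * hX'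
      - (((3 * ρ' - β') + (-2 : H) * X') * (u' * v')) * hY'
      + ((((ρ' - β') ^ 2 - 4 * hb' ^ 2)) * v') * hu' + hv'
  have key2 : (2 * (ρ' ^ 2 + β' ^ 2 - 3 * (β' * ρ') - hb' ^ 2) * (u' * v')
      + (3 * β' - ρ') * (u' * v') * X' + (3 * ρ' - β') * (u' * v') * Y'
      + -2 * (u' * v') * (X' * Y')) * (X' - Y') = 1 := by
    rw [mul_comm]; exact key
  constructor
  · have h := congrArg (Subtype.val : H → R) key
    push_cast at h
    exact h
  · have h := congrArg (Subtype.val : H → R) key2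
    push_cast at h
    exact h
end
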